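/- arXiv:2302.09733 — 2 statements merged into one kernel-verified Lean document; each statement's English description precedes it below -/
import Mathlib

section
/- Let n ≥ 1, δ > 0, C ≥ 0, and let u : ℝⁿ × (0, ∞) → ℝ be a positive continuously differentiable function such that at every point (x, t), ‖∇u(x,t)‖²/u(x,t)² − δ·(∂u/∂t)(x,t)/u(x,t) ≤ C + C/t, where ∇u denotes the spatial gradient. Then for all 0 < t₁ < t₂ and all x, y ∈ ℝⁿ, u(x, t₁) ≤ u(y, t₂)·(t₂/t₁)^{C/δ}·exp( (C/δ)·(t₂ − t₁) + δ·‖x − y‖²/(4(t₂ − t₁)) ). -/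
open scoped RealInnerProductSpace

lemma aux_stmt9 (δ C s U A B I P : ℝ) (hδ : 0 < δ) (hC : 0 ≤ C) (hs : 0 < s) (hU : 0 < U)
    (hly : A ^ 2 / U ^ 2 - δ * P / U ≤ C + C / s) (hI : -(A * B) ≤ I) :
    0 ≤ (I + P) / U + δ * B ^ 2 / 4 + (C / δ) * (1 + s⁻¹) := by
  have h2 : A ^ 2 / U ^ 2 - (C + C / s) ≤ δ * P / U := by linarith
  have h2' : (A ^ 2 / U ^ 2 - (C + C / s)) / δ ≤ P / U := by
    calc (A ^ 2 / U ^ 2 - (C + C / s)) / δ ≤ (δ * P / U) / δ :=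
          div_le_div_of_nonneg_right h2 hδ.le
      _ = P / U := by field_simp
  have h6 : (A ^ 2 / U ^ 2 - (C + C / s)) / δ = A ^ 2 / (δ * U ^ 2) - (C / δ) * (1 + s⁻¹) := by
    field_simp
  have h3 : -(A * B) / U ≤ I / U := div_le_div_of_nonneg_right hI hU.le
  have h4 : A ^ 2 / (δ * U ^ 2) + δ * B ^ 2 / 4 - A * B / U
      = (2 * A - δ * B * U) ^ 2 / (4 * δ * U ^ 2) := by
    field_simp
    ring
  have h5 : (0:ℝ) ≤ (2 * A - δ * B * U) ^ 2 / (4 * δ * U ^ 2) := by positivity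
  have hadd : (I + P) / U = I / U + P / U := add_div I P U
  have hnd : -(A * B) / U = -(A * B / U) := by ring
  rw [h6] at h2'
  linarith [h2', h3, h4, h5]

/-- Euclidean Harnack inequality from a Li–Yau type gradient estimate: if `u > 0` is `C¹`
on `ℝⁿ × (0,∞)` and satisfies `‖∇u‖²/u² − δ u_t/u ≤ C + C/t` everywhere, then for
`0 < t₁ < t₂` and all `x, y`:
`u(x,t₁) ≤ u(y,t₂) (t₂/t₁)^{C/δ} exp((C/δ)(t₂−t₁) + δ‖x−y‖²/(4(t₂−t₁)))`. -/
theorem stmt_9 (n : ℕ) (hn : 1 ≤ n) (δ C : ℝ) (hδ : 0 < δ) (hC : 0 ≤ C)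
    (u : EuclideanSpace ℝ (Fin n) → ℝ → ℝ)
    (hu_pos : ∀ x t, 0 < t → 0 < u x t)
    (hu_diff : ContDiffOn ℝ 1 (fun p : EuclideanSpace ℝ (Fin n) × ℝ => u p.1 p.2)
      (Set.univ ×ˢ Set.Ioi (0 : ℝ)))
    (hLY : ∀ x t, 0 < t →
      ‖gradient (fun y => u y t) x‖ ^ 2 / (u x t) ^ 2 - δ * deriv (u x) t / u x t ≤ C + C / t)
    (t₁ t₂ : ℝ) (ht₁ : 0 < t₁) (ht₁₂ : t₁ < t₂) (x y : EuclideanSpace ℝ (Fin n)) :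
    u x t₁ ≤ u y t₂ * (t₂ / t₁) ^ (C / δ) *
      Real.exp ((C / δ) * (t₂ - t₁) + δ * ‖x - y‖ ^ 2 / (4 * (t₂ - t₁))) := by
  have hT : 0 < t₂ - t₁ := sub_pos.2 ht₁₂
  have ht₂ : 0 < t₂ := ht₁.trans ht₁₂
  set v : EuclideanSpace ℝ (Fin n) := (t₂ - t₁)⁻¹ • (y - x) with hv
  set γ : ℝ → EuclideanSpace ℝ (Fin n) := fun s => x + (s - t₁) • v with hγ
  have hγ₁ : γ t₁ = x := by simp [hγ]
  have hγ₂ : γ t₂ = y := by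
    simp only [hγ, hv, smul_smul]
    rw [mul_inv_cancel₀ hT.ne', one_smul]
    abel
  set F : ℝ → ℝ := fun s =>
    Real.log (u (γ s) s) + δ * ‖v‖ ^ 2 / 4 * s + (C / δ) * (s + Real.log s) with hF
  have hopen : IsOpen ((Set.univ : Set (EuclideanSpace ℝ (Fin n))) ×ˢ Set.Ioi (0:ℝ)) :=
    isOpen_univ.prod isOpen_Ioi
  have key : ∀ s, 0 < s → ∃ d, HasDerivAt F d s ∧ 0 ≤ d := by
    intro s hs
    have hus : 0 < u (γ s) s := hu_pos _ _ hs
    have hmem : ((γ s, s) : EuclideanSpace ℝ (Fin n) × ℝ) ∈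
        (Set.univ : Set (EuclideanSpace ℝ (Fin n))) ×ˢ Set.Ioi (0:ℝ) := by
      simp [hs]
    have hdiffU : DifferentiableAt ℝ (fun p : EuclideanSpace ℝ (Fin n) × ℝ => u p.1 p.2)
        (γ s, s) :=
      ((hu_diff.differentiableOn one_ne_zero) _ hmem).differentiableAt (hopen.mem_nhds hmem)
    set L := fderiv ℝ (fun p : EuclideanSpace ℝ (Fin n) × ℝ => u p.1 p.2) (γ s, s) with hL
    have hU : HasFDerivAt (fun p : EuclideanSpace ℝ (Fin n) × ℝ => u p.1 p.2) L (γ s, s) :=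
      hdiffU.hasFDerivAt
    -- time slice
    have hslt : HasDerivAt (u (γ s)) (L (0, 1)) s := by
      have h1 : HasDerivAt (fun t : ℝ => ((γ s, t) : EuclideanSpace ℝ (Fin n) × ℝ))
          ((0 : EuclideanSpace ℝ (Fin n)), (1:ℝ)) s :=
        (hasDerivAt_const s (γ s)).prodMk (hasDerivAt_id s)
      exact hU.comp_hasDerivAt s h1
    -- space slice
    set ℓ := L.comp (ContinuousLinearMap.inl ℝ (EuclideanSpace ℝ (Fin n)) ℝ) with hℓ
    have hslx : HasFDerivAt (fun z => u z s) ℓ (γ s) := by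
      have h1 : HasFDerivAt (fun z : EuclideanSpace ℝ (Fin n) => ((z, s) : _ × ℝ))
          (ContinuousLinearMap.inl ℝ (EuclideanSpace ℝ (Fin n)) ℝ) (γ s) :=
        hasFDerivAt_prodMk_left (γ s) s
      exact hU.comp (γ s) h1
    set g := (InnerProductSpace.toDual ℝ (EuclideanSpace ℝ (Fin n))).symm ℓ with hg
    have hgrad : HasGradientAt (fun z => u z s) g (γ s) := hslx.hasGradientAt
    have hgradeq : gradient (fun z => u z s) (γ s) = g := hgrad.gradient
    have hinner : ∀ w, ℓ w = ⟪g, w⟫ := by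
      intro w
      rw [hg, ← InnerProductSpace.toDual_apply_apply,
        (InnerProductSpace.toDual ℝ (EuclideanSpace ℝ (Fin n))).apply_symm_apply]
    -- path derivative
    have hγd : HasDerivAt γ v s := by
      have h0 : HasDerivAt (fun s : ℝ => (s - t₁) • v) v s := by
        simpa using ((hasDerivAt_id s).sub_const t₁).smul_const v
      simpa [hγ] using h0.const_add x
    have hpd : HasDerivAt (fun s : ℝ => ((γ s, s) : EuclideanSpace ℝ (Fin n) × ℝ)) (v, 1) s :=
      hγd.prodMk (hasDerivAt_id s)
    have hφ : HasDerivAt (fun s => u (γ s) s) (L (v, 1)) s :=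
      HasFDerivAt.comp_hasDerivAt (f := fun r : ℝ => ((γ r, r) : EuclideanSpace ℝ (Fin n) × ℝ)) s hU hpd
    have hlog : HasDerivAt (fun s => Real.log (u (γ s) s)) (L (v, 1) / u (γ s) s) s :=
      hφ.log hus.ne'
    have hF' : HasDerivAt F
        (L (v, 1) / u (γ s) s + δ * ‖v‖ ^ 2 / 4 + (C / δ) * (1 + s⁻¹)) s := by
      have h2 : HasDerivAt (fun s : ℝ => δ * ‖v‖ ^ 2 / 4 * s) (δ * ‖v‖ ^ 2 / 4) s := by
        simpa using (hasDerivAt_id s).const_mul (δ * ‖v‖ ^ 2 / 4)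
      have h3 : HasDerivAt (fun s : ℝ => (C / δ) * (s + Real.log s)) ((C / δ) * (1 + s⁻¹)) s :=
        ((hasDerivAt_id s).add (Real.hasDerivAt_log hs.ne')).const_mul (C / δ)
      exact (hlog.add h2).add h3
    refine ⟨_, hF', ?_⟩
    have hsplit : L (v, 1) = ⟪g, v⟫ + L (0, 1) := by
      rw [← hinner v]
      have h1 : ((v, (1:ℝ)) : EuclideanSpace ℝ (Fin n) × ℝ) = (v, 0) + (0, 1) := by
        simp [Prod.ext_iff]
      rw [h1, map_add]
      simp [hℓ]
    have hly := hLY (γ s) s hs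
    rw [hgradeq, hslt.deriv] at hly
    have hib : -(‖g‖ * ‖v‖) ≤ ⟪g, v⟫ := by
      have := abs_real_inner_le_norm g v
      have := neg_abs_le (⟪g, v⟫)
      linarith
    rw [hsplit]
    exact aux_stmt9 δ C s (u (γ s) s) ‖g‖ ‖v‖ (⟪g, v⟫) (L (0,1)) hδ hC hs hus hly hib
  -- monotonicity
  have hmono : MonotoneOn F (Set.Icc t₁ t₂) := by
    apply monotoneOn_of_deriv_nonneg (convex_Icc t₁ t₂)
    · intro s hsmem
      have hs : 0 < s := lt_of_lt_of_le ht₁ hsmem.1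
      obtain ⟨d, hd, _⟩ := key s hs
      exact hd.continuousAt.continuousWithinAt
    · intro s hsmem
      rw [interior_Icc] at hsmem
      have hs : 0 < s := lt_of_lt_of_le ht₁ hsmem.1.le
      obtain ⟨d, hd, _⟩ := key s hs
      exact hd.differentiableAt.differentiableWithinAt
    · intro s hsmem
      rw [interior_Icc] at hsmem
      have hs : 0 < s := lt_of_lt_of_le ht₁ hsmem.1.le
      obtain ⟨d, hd, hd0⟩ := key s hs
      rw [hd.deriv]
      exact hd0
  have hFle : F t₁ ≤ F t₂ :=
    hmono (Set.left_mem_Icc.2 ht₁₂.le) (Set.right_mem_Icc.2 ht₁₂.le) ht₁₂.le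
  -- unfold F
  have hux : 0 < u x t₁ := hu_pos _ _ ht₁
  have huy : 0 < u y t₂ := hu_pos _ _ ht₂
  have hvnorm : δ * ‖v‖ ^ 2 / 4 * (t₂ - t₁) = δ * ‖x - y‖ ^ 2 / (4 * (t₂ - t₁)) := by
    have h1 : ‖v‖ = ‖x - y‖ / (t₂ - t₁) := by
      rw [hv, norm_smul, norm_sub_rev]
      simp [abs_of_pos hT, div_eq_inv_mul]
    rw [h1]
    field_simp
  have hlogF : Real.log (u x t₁) ≤ Real.log (u y t₂) + (C / δ) * (Real.log t₂ - Real.log t₁)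
      + ((C / δ) * (t₂ - t₁) + δ * ‖x - y‖ ^ 2 / (4 * (t₂ - t₁))) := by
    have := hFle
    rw [hF] at this
    simp only [hγ₁, hγ₂] at this
    nlinarith [this, hvnorm]
  -- conclude
  have hRpos : 0 < u y t₂ * (t₂ / t₁) ^ (C / δ) *
      Real.exp ((C / δ) * (t₂ - t₁) + δ * ‖x - y‖ ^ 2 / (4 * (t₂ - t₁))) := by
    have : (0:ℝ) < t₂ / t₁ := div_pos ht₂ ht₁
    positivity
  rw [← Real.log_le_log_iff hux hRpos]
  rw [Real.log_mul (by positivity) (Real.exp_pos _).ne', Real.log_mul huy.ne'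
    (by positivity), Real.log_exp, Real.log_rpow (div_pos ht₂ ht₁),
    Real.log_div ht₂.ne' ht₁.ne']
  linarith [hlogF]
end

section
/- Let n ≥ 1, δ > 0, C ≥ 0, and let u : ℝⁿ × (0, ∞) → ℝ be a positive continuously differentiable function such that at every point (x, t), ‖∇u(x,t)‖²/u(x,t)² − δ·(∂u/∂t)(x,t)/u(x,t) ≤ C + C/t, where ∇u denotes the spatial gradient; assume moreover that y ↦ u(y, t₂)² is integrable on every ball. Then for all 0 < t₁ < t₂, x ∈ ℝⁿ and r > 0, u(x, t₁) ≤ (vol B(x,r))^{−1/2}·( ∫_{B(x,r)} u(y, t₂)² dy )^{1/2}·(t₂/t₁)^{C/δ}·exp( (C/δ)·(t₂ − t₁) + δ·r²/(4(t₂ − t₁)) ), where B(x,r) is the Euclidean ball of radius r centered at x and vol denotes Lebesgue measure. -/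
open MeasureTheory

set_option maxHeartbeats 1000000

open MeasureTheory
open scoped RealInnerProductSpace

lemma harnack_log_aux (n : ℕ) (δ C : ℝ) (hδ : 0 < δ) (hC : 0 ≤ C)
    (u : EuclideanSpace ℝ (Fin n) → ℝ → ℝ)
    (hu_pos : ∀ x t, 0 < t → 0 < u x t)
    (hu_diff : ContDiffOn ℝ 1 (fun p : EuclideanSpace ℝ (Fin n) × ℝ => u p.1 p.2)
      (Set.univ ×ˢ Set.Ioi (0 : ℝ)))
    (hLY : ∀ x t, 0 < t →
      ‖gradient (fun y => u y t) x‖ ^ 2 / (u x t) ^ 2 - δ * deriv (u x) t / u x t ≤ C + C / t)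
    (t₁ t₂ : ℝ) (ht₁ : 0 < t₁) (ht₁₂ : t₁ < t₂)
    (x y : EuclideanSpace ℝ (Fin n)) :
    Real.log (u x t₁) ≤ Real.log (u y t₂) + (C/δ) * (Real.log t₂ - Real.log t₁)
      + (C/δ) * (t₂ - t₁) + δ * ‖y - x‖^2 / (4 * (t₂ - t₁)) := by
  set Δ := t₂ - t₁ with hΔdef
  have hΔ : 0 < Δ := sub_pos.2 ht₁₂
  set v := y - x with hvdef
  set γ : ℝ → EuclideanSpace ℝ (Fin n) := fun s => x + s • v with hγdef
  set τ : ℝ → ℝ := fun s => t₁ + s * Δ with hτdef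
  set φ : ℝ → ℝ := fun s => Real.log (u (γ s) (τ s)) + (δ * ‖v‖^2/(4*Δ)) * s
      + ((C/δ)*Δ) * s + (C/δ) * Real.log (τ s) with hφdef
  have hτpos : ∀ s ∈ Set.Icc (0:ℝ) 1, 0 < τ s := by
    intro s hs
    have h0 := hs.1
    simp only [hτdef]
    nlinarith
  have hkey : ∀ s ∈ Set.Icc (0:ℝ) 1, ∃ d, 0 ≤ d ∧ HasDerivAt φ d s := by
    intro s hs
    have hτs : 0 < τ s := hτpos s hs
    have hus : 0 < u (γ s) (τ s) := hu_pos _ _ hτs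
    have hopen : IsOpen ((Set.univ : Set (EuclideanSpace ℝ (Fin n))) ×ˢ Set.Ioi (0:ℝ)) :=
      isOpen_univ.prod isOpen_Ioi
    have hmem : ((γ s, τ s) : EuclideanSpace ℝ (Fin n) × ℝ) ∈
        (Set.univ : Set (EuclideanSpace ℝ (Fin n))) ×ˢ Set.Ioi (0:ℝ) := ⟨trivial, hτs⟩
    have hdiffU : DifferentiableAt ℝ (fun p : EuclideanSpace ℝ (Fin n) × ℝ => u p.1 p.2)
        (γ s, τ s) :=
      (hu_diff.contDiffAt (hopen.mem_nhds hmem)).differentiableAt one_ne_zero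
    set L := fderiv ℝ (fun p : EuclideanSpace ℝ (Fin n) × ℝ => u p.1 p.2) (γ s, τ s) with hLdef
    have hL : HasFDerivAt (fun p : EuclideanSpace ℝ (Fin n) × ℝ => u p.1 p.2) L (γ s, τ s) :=
      hdiffU.hasFDerivAt
    have hγd : HasDerivAt γ v s := by
      simpa [hγdef] using ((hasDerivAt_id s).smul_const v).const_add x
    have hτd : HasDerivAt τ Δ s := by
      simpa [hτdef] using ((hasDerivAt_id s).mul_const Δ).const_add t₁
    have hP : HasDerivAt (fun s => ((γ s, τ s) : EuclideanSpace ℝ (Fin n) × ℝ)) (v, Δ) s :=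
      hγd.prodMk hτd
    have hF : HasDerivAt (fun s => u (γ s) (τ s)) (L (v, Δ)) s :=
      by have := hL.comp_hasDerivAt s hP; exact this
    -- partial in x, gradient
    have hι : HasFDerivAt (fun z : EuclideanSpace ℝ (Fin n) => ((z, τ s) :
        EuclideanSpace ℝ (Fin n) × ℝ))
        ((ContinuousLinearMap.id ℝ (EuclideanSpace ℝ (Fin n))).prod 0) (γ s) :=
      (hasFDerivAt_id _).prodMk (hasFDerivAt_const _ _)
    have hx1 : HasFDerivAt (fun z => u z (τ s))
        (L.comp ((ContinuousLinearMap.id ℝ (EuclideanSpace ℝ (Fin n))).prod 0)) (γ s) :=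
      by have := HasFDerivAt.comp (γ s) hL hι; exact this
    have hgrad :
        HasGradientAt (fun z => u z (τ s)) (gradient (fun z => u z (τ s)) (γ s)) (γ s) :=
      hx1.differentiableAt.hasGradientAt
    have hge := (hgrad.hasFDerivAt).unique hx1
    have hxv : ⟪gradient (fun z => u z (τ s)) (γ s), v⟫ = L (v, 0) := by
      have := congrArg (fun T : EuclideanSpace ℝ (Fin n) →L[ℝ] ℝ => T v) hge
      simpa [InnerProductSpace.toDual_apply_apply] using this
    -- partial in t
    have ht1 : HasDerivAt (fun t => u (γ s) t) (L ((0 : EuclideanSpace ℝ (Fin n)), 1)) (τ s) :=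
      hL.comp_hasDerivAt (τ s) ((hasDerivAt_const _ _).prodMk (hasDerivAt_id _))
    have hdt : deriv (u (γ s)) (τ s) = L (0, 1) := ht1.deriv
    -- linear decomposition
    have hsplit : L (v, Δ) = ⟪gradient (fun z => u z (τ s)) (γ s), v⟫
        + Δ * deriv (u (γ s)) (τ s) := by
      have hvd : ((v, Δ) : EuclideanSpace ℝ (Fin n) × ℝ) = (v, 0) + Δ • (0, 1) := by
        simp [Prod.ext_iff]
      rw [hxv, hdt, hvd, map_add, ContinuousLinearMap.map_smul, smul_eq_mul]
    -- derivative of φ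
    have h1 : HasDerivAt (fun s : ℝ => (δ * ‖v‖^2/(4*Δ)) * s) (δ * ‖v‖^2/(4*Δ)) s := by
      simpa using (hasDerivAt_id s).const_mul (δ * ‖v‖^2/(4*Δ))
    have h2 : HasDerivAt (fun s : ℝ => ((C/δ)*Δ) * s) ((C/δ)*Δ) s := by
      simpa using (hasDerivAt_id s).const_mul ((C/δ)*Δ)
    have hlogF : HasDerivAt (fun s => Real.log (u (γ s) (τ s)))
        ((u (γ s) (τ s))⁻¹ * L (v, Δ)) s :=
      by have := (Real.hasDerivAt_log hus.ne').comp s hF; exact this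
    have hlogτ : HasDerivAt (fun s => Real.log (τ s)) ((τ s)⁻¹ * Δ) s :=
      (Real.hasDerivAt_log hτs.ne').comp s hτd
    have h3 : HasDerivAt (fun s => (C/δ) * Real.log (τ s)) ((C/δ) * ((τ s)⁻¹ * Δ)) s :=
      hlogτ.const_mul (C/δ)
    have hφd : HasDerivAt φ ((u (γ s) (τ s))⁻¹ * L (v, Δ) + (δ * ‖v‖^2/(4*Δ))
        + ((C/δ)*Δ) + (C/δ) * ((τ s)⁻¹ * Δ)) s :=
      ((hlogF.add h1).add h2).add h3
    refine ⟨_, ?_, hφd⟩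
    -- nonnegativity of the derivative
    rw [hsplit]
    set A := ‖gradient (fun z => u z (τ s)) (γ s)‖ with hAdef
    set U0 := u (γ s) (τ s) with hU0def
    set D := deriv (u (γ s)) (τ s) with hDdef
    set T := τ s with hTdef
    set V := ‖v‖ with hVdef
    set In := ⟪gradient (fun z => u z (τ s)) (γ s), v⟫ with hIndef
    have hA0 : 0 ≤ A := norm_nonneg _
    have hV0 : 0 ≤ V := norm_nonneg _
    have hinner : -(A*V) ≤ In := by
      have := abs_real_inner_le_norm (gradient (fun z => u z (τ s)) (γ s)) v
      have h' := neg_abs_le In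
      calc -(A*V) ≤ -|In| := by rw [neg_le_neg_iff]; exact this
        _ ≤ In := h'
    have hLY' : A^2 / U0^2 - δ * D / U0 ≤ C + C/T := hLY (γ s) (τ s) hτs
    have hU0ne : U0 ≠ 0 := hus.ne'
    have hTne : T ≠ 0 := hτs.ne'
    have hΔne : Δ ≠ 0 := hΔ.ne'
    have hδne : δ ≠ 0 := hδ.ne'
    have hLY2 : A^2 * T - δ * D * U0 * T ≤ C * U0^2 * T + C * U0^2 := by
      have hmul := mul_le_mul_of_nonneg_right hLY' (by positivity : (0:ℝ) ≤ U0^2 * T)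
      have hL2 : (A^2/U0^2 - δ*D/U0) * (U0^2*T) = A^2*T - δ*D*U0*T := by
        field_simp
      have hR2 : (C + C/T) * (U0^2*T) = C*U0^2*T + C*U0^2 := by
        field_simp
      rw [hL2, hR2] at hmul
      exact hmul
    have hc : (0:ℝ) < U0^2 * (4*Δ) * δ * T := by positivity
    have hexpand : (U0⁻¹ * (In + Δ * D) + δ * V ^ 2 / (4 * Δ) + C / δ * Δ
          + C / δ * (T⁻¹ * Δ)) * (U0 ^ 2 * (4 * Δ) * δ * T)
        = 4*Δ*δ*T*U0*In + 4*Δ^2*δ*T*U0*D + δ^2*V^2*T*U0^2 + 4*C*Δ^2*T*U0^2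
          + 4*C*Δ^2*U0^2 := by
      field_simp
    have hgoal : (0:ℝ) ≤ U0⁻¹ * (In + Δ * D) + δ * V ^ 2 / (4 * Δ) + C / δ * Δ
        + C / δ * (T⁻¹ * Δ) := by
      rw [← mul_nonneg_iff_of_pos_right hc, hexpand]
      nlinarith [mul_nonneg hτs.le (sq_nonneg (2*Δ*A - δ*V*U0)),
        mul_le_mul_of_nonneg_left hinner (by positivity : (0:ℝ) ≤ 4*Δ*δ*U0*T),
        mul_le_mul_of_nonneg_left hLY2 (by positivity : (0:ℝ) ≤ 4*Δ^2)]
    linarith [hgoal]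
  -- monotonicity
  have hmono : MonotoneOn φ (Set.Icc (0:ℝ) 1) := by
    apply monotoneOn_of_deriv_nonneg (convex_Icc 0 1)
    · intro s hs
      obtain ⟨d, _, hder⟩ := hkey s hs
      exact hder.continuousAt.continuousWithinAt
    · intro s hs
      rw [interior_Icc] at hs
      obtain ⟨d, _, hder⟩ := hkey s (Set.mem_Icc_of_Ioo hs)
      exact hder.differentiableAt.differentiableWithinAt
    · intro s hs
      rw [interior_Icc] at hs
      obtain ⟨d, hd0, hder⟩ := hkey s (Set.mem_Icc_of_Ioo hs)
      rw [hder.deriv]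
      exact hd0
  have h01 := hmono (Set.left_mem_Icc.2 zero_le_one) (Set.right_mem_Icc.2 zero_le_one) zero_le_one
  have hγ0 : γ 0 = x := by simp [hγdef]
  have hγ1 : γ 1 = y := by simp [hγdef, hvdef]
  have hτ0 : τ 0 = t₁ := by simp [hτdef]
  have hτ1 : τ 1 = t₂ := by simp [hτdef, hΔdef]
  simp only [hφdef, hγ0, hγ1, hτ0, hτ1, mul_zero, mul_one, add_zero] at h01
  linarith

/-- Euclidean mean value type inequality: under the Li–Yau type gradient estimate for a
positive `C¹` solution `u` on `ℝⁿ × (0,∞)`, with `y ↦ u(y,t₂)²` integrable on every ball,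
for `0 < t₁ < t₂`, `x ∈ ℝⁿ` and `r > 0`:
`u(x,t₁) ≤ (vol B(x,r))^{−1/2} (∫_{B(x,r)} u(y,t₂)² dy)^{1/2} (t₂/t₁)^{C/δ}
  exp((C/δ)(t₂−t₁) + δ r²/(4(t₂−t₁)))`. -/
theorem stmt_10 (n : ℕ) (hn : 1 ≤ n) (δ C : ℝ) (hδ : 0 < δ) (hC : 0 ≤ C)
    (u : EuclideanSpace ℝ (Fin n) → ℝ → ℝ)
    (hu_pos : ∀ x t, 0 < t → 0 < u x t)
    (hu_diff : ContDiffOn ℝ 1 (fun p : EuclideanSpace ℝ (Fin n) × ℝ => u p.1 p.2)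
      (Set.univ ×ˢ Set.Ioi (0 : ℝ)))
    (hLY : ∀ x t, 0 < t →
      ‖gradient (fun y => u y t) x‖ ^ 2 / (u x t) ^ 2 - δ * deriv (u x) t / u x t ≤ C + C / t)
    (t₁ t₂ : ℝ) (ht₁ : 0 < t₁) (ht₁₂ : t₁ < t₂)
    (hint : ∀ (z : EuclideanSpace ℝ (Fin n)) (ρ : ℝ),
      IntegrableOn (fun y => (u y t₂) ^ 2) (Metric.ball z ρ))
    (x : EuclideanSpace ℝ (Fin n)) (r : ℝ) (hr : 0 < r) :
    u x t₁ ≤ (volume (Metric.ball x r)).toReal ^ (-(1 / 2) : ℝ) *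
      (∫ y in Metric.ball x r, (u y t₂) ^ 2) ^ ((1 / 2) : ℝ) *
      (t₂ / t₁) ^ (C / δ) *
      Real.exp ((C / δ) * (t₂ - t₁) + δ * r ^ 2 / (4 * (t₂ - t₁))) := by
  have hΔ : 0 < t₂ - t₁ := sub_pos.2 ht₁₂
  have ht₂ : 0 < t₂ := ht₁.trans ht₁₂
  set K := (t₂ / t₁) ^ (C / δ) *
    Real.exp ((C / δ) * (t₂ - t₁) + δ * r ^ 2 / (4 * (t₂ - t₁))) with hK
  have hdivpos : 0 < t₂ / t₁ := by positivity
  have hKpos : 0 < K := by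
    rw [hK]; positivity
  have hharnack : ∀ y ∈ Metric.ball x r, u x t₁ ≤ u y t₂ * K := by
    intro y hy
    have hlog := harnack_log_aux n δ C hδ hC u hu_pos hu_diff hLY t₁ t₂ ht₁ ht₁₂ x y
    have hyx : ‖y - x‖ ≤ r := (mem_ball_iff_norm.1 hy).le
    have hsq : ‖y - x‖ ^ 2 ≤ r ^ 2 := by nlinarith [norm_nonneg (y - x)]
    have h2 : δ * ‖y - x‖ ^ 2 / (4 * (t₂ - t₁)) ≤ δ * r ^ 2 / (4 * (t₂ - t₁)) := by
      gcongr
    have hlogK : Real.log K = (C / δ) * (Real.log t₂ - Real.log t₁)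
        + ((C / δ) * (t₂ - t₁) + δ * r ^ 2 / (4 * (t₂ - t₁))) := by
      rw [hK, Real.log_mul (by positivity) (Real.exp_ne_zero _),
        Real.log_rpow hdivpos, Real.log_div ht₂.ne' ht₁.ne', Real.log_exp]
    have hle : Real.log (u x t₁) ≤ Real.log (u y t₂ * K) := by
      rw [Real.log_mul (hu_pos y t₂ ht₂).ne' hKpos.ne', hlogK]
      linarith
    calc u x t₁ = Real.exp (Real.log (u x t₁)) := (Real.exp_log (hu_pos x t₁ ht₁)).symm
      _ ≤ Real.exp (Real.log (u y t₂ * K)) := Real.exp_le_exp.2 hle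
      _ = u y t₂ * K := Real.exp_log (mul_pos (hu_pos y t₂ ht₂) hKpos)
  have hVfin : volume (Metric.ball x r) < ⊤ := measure_ball_lt_top
  set V := (volume (Metric.ball x r)).toReal with hV
  have hVpos : 0 < V := ENNReal.toReal_pos (Metric.measure_ball_pos volume x hr).ne' hVfin.ne
  set I := ∫ y in Metric.ball x r, (u y t₂) ^ 2 with hI
  have hI0 : 0 ≤ I := setIntegral_nonneg measurableSet_ball (fun y _ => sq_nonneg _)
  have hsqle : ∀ y ∈ Metric.ball x r, (u x t₁) ^ 2 ≤ K ^ 2 * (u y t₂) ^ 2 := by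
    intro y hy
    have h := hharnack y hy
    have h1 : 0 ≤ u x t₁ := (hu_pos x t₁ ht₁).le
    have h3 := mul_self_le_mul_self h1 h
    nlinarith [h3]
  have hint2 : IntegrableOn (fun y => K ^ 2 * (u y t₂) ^ 2) (Metric.ball x r) :=
    (hint x r).const_mul _
  have hconst : IntegrableOn (fun _ => (u x t₁) ^ 2) (Metric.ball x r) :=
    integrableOn_const hVfin.ne
  have hmono := setIntegral_mono_on hconst hint2 measurableSet_ball hsqle
  rw [setIntegral_const, integral_const_mul] at hmono
  have hkey : (u x t₁) ^ 2 * V ≤ K ^ 2 * I := by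
    rw [smul_eq_mul, ← hI, measureReal_def, ← hV] at hmono; linarith [hmono]
  have hR0 : 0 ≤ V ^ (-(1 / 2) : ℝ) * I ^ ((1 / 2) : ℝ) * K := by positivity
  have hRsq : (V ^ (-(1 / 2) : ℝ) * I ^ ((1 / 2) : ℝ) * K) ^ 2 = V⁻¹ * I * K ^ 2 := by
    have h1 : V ^ (-(1 / 2) : ℝ) * V ^ (-(1 / 2) : ℝ) = V⁻¹ := by
      rw [← Real.rpow_add hVpos]
      norm_num [Real.rpow_neg_one]
    have h2 : I ^ ((1 / 2) : ℝ) * I ^ ((1 / 2) : ℝ) = I := by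
      rw [← Real.rpow_add' hI0 (by norm_num : ((1:ℝ)/2) + 1/2 ≠ 0)]
      norm_num
    calc (V ^ (-(1 / 2) : ℝ) * I ^ ((1 / 2) : ℝ) * K) ^ 2
        = (V ^ (-(1 / 2) : ℝ) * V ^ (-(1 / 2) : ℝ)) * (I ^ ((1 / 2) : ℝ) * I ^ ((1 / 2) : ℝ))
          * K ^ 2 := by ring
      _ = V⁻¹ * I * K ^ 2 := by rw [h1, h2]
  have husq : (u x t₁) ^ 2 ≤ (V ^ (-(1 / 2) : ℝ) * I ^ ((1 / 2) : ℝ) * K) ^ 2 := by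
    rw [hRsq]
    calc (u x t₁) ^ 2 ≤ K ^ 2 * I / V := by rw [le_div_iff₀ hVpos]; exact hkey
      _ = V⁻¹ * I * K ^ 2 := by field_simp
  have hfinal : u x t₁ ≤ V ^ (-(1 / 2) : ℝ) * I ^ ((1 / 2) : ℝ) * K := by
    have h1 := Real.sqrt_le_sqrt husq
    rwa [Real.sqrt_sq (hu_pos x t₁ ht₁).le, Real.sqrt_sq hR0] at h1
  calc u x t₁ ≤ V ^ (-(1 / 2) : ℝ) * I ^ ((1 / 2) : ℝ) * K := hfinal
    _ = _ := by rw [hK]; ring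
end
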